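/- Let n ≥ 2, let (K_n, λ) be a random simple temporal graph on n vertices, and let δ ∈ (0,1]. Let Q and Q' be two k-element vertex subsets of {1,…,n} with 2 ≤ k ≤ n whose intersection has exactly t elements, where 1 ≤ t ≤ k−1. Then P(both Q and Q' are δ-temporal cliques) ≤ ( C(k,2)·δ^{C(k,2)−1}·(1−δ) + δ^{C(k,2)} ) · C(k,2) · δ^{C(k,2)−C(t,2)−1}, where C(a,2) = a(a−1)/2. -/

import Mathlib

open MeasureTheory ProbabilityTheory

/-- The edge set of the complete graph `K_n` on vertex set `Fin n`:
unordered pairs of distinct vertices. -/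
def EdgeKn (n : ℕ) : Type := {e : Sym2 (Fin n) // ¬ e.IsDiag}

noncomputable instance (n : ℕ) : Fintype (EdgeKn n) := by
  classical
  unfold EdgeKn
  infer_instance

instance (n : ℕ) : DecidableEq (EdgeKn n) := by
  unfold EdgeKn
  infer_instance


/-- `Q` is a `δ`-temporal clique for the labeling `lam` if any two edges with
both endpoints in `Q` carry labels at most `δ` apart. -/
def IsTemporalClique {n : ℕ} (lam : EdgeKn n → ℝ) (δ : ℝ) (Q : Finset (Fin n)) : Prop :=
  ∀ e e' : EdgeKn n, (∀ v ∈ e.1, v ∈ Q) → (∀ v ∈ e'.1, v ∈ Q) →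
    |lam e - lam e'| ≤ δ

open scoped Classical in
/-- The number of `k`-element vertex subsets of `Fin n` that are `δ`-temporal cliques. -/
noncomputable def cliqueCount {n : ℕ} (lam : EdgeKn n → ℝ) (δ : ℝ) (k : ℕ) : ℕ :=
  ((Finset.univ.powersetCard k).filter (fun Q => IsTemporalClique lam δ Q)).card

open scoped Classical in
noncomputable def edgesIn {n : ℕ} (Q : Finset (Fin n)) : Finset (EdgeKn n) :=
  Finset.univ.filter (fun e => ∀ v ∈ e.1, v ∈ Q)

lemma mem_edgesIn {n : ℕ} (Q : Finset (Fin n)) (e : EdgeKn n) :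
    e ∈ edgesIn Q ↔ ∀ v ∈ e.1, v ∈ Q := by
  classical
  simp [edgesIn]

lemma card_edgesIn {n : ℕ} (Q : Finset (Fin n)) :
    (edgesIn Q).card = Q.card.choose 2 := by
  classical
  have hbij : (edgesIn Q).card = (Q.sym2.filter (fun z => ¬ z.IsDiag)).card := by
    apply Finset.card_bij (fun e _ => e.1)
    · intro e he
      rw [mem_edgesIn] at he
      simp only [Finset.mem_filter, Finset.mem_sym2_iff]
      exact ⟨he, e.2⟩
    · intro a ha b hb hab
      exact Subtype.ext hab
    · intro z hz
      simp only [Finset.mem_filter, Finset.mem_sym2_iff] at hz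
      exact ⟨⟨z, hz.2⟩, (mem_edgesIn Q _).mpr hz.1, rfl⟩
  have hdiag : (Q.sym2.filter (fun z => z.IsDiag)).card = Q.card := by
    symm
    apply Finset.card_bij (fun x _ => Sym2.diag x)
    · intro x hx
      simp only [Finset.mem_filter, Finset.mem_sym2_iff]
      refine ⟨fun y hy => ?_, Sym2.diag_isDiag x⟩
      rw [Sym2.diag, Sym2.mem_iff] at hy
      rcases hy with h | h <;> simpa [h]
    · intro a _ b _ h
      exact Sym2.diag_injective h
    · intro z hz
      simp only [Finset.mem_filter, Finset.mem_sym2_iff] at hz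
      obtain ⟨x, hx⟩ := (⟨_, Sym2.diag_diagElem hz.2⟩ : ∃ x, Sym2.diag x = z)
      refine ⟨x, ?_, hx⟩
      have := hz.1 x ?_
      · exact this
      · rw [← hx]; rw [Sym2.diag, Sym2.mem_iff]; left; rfl
  have hsplit := Finset.card_filter_add_card_filter_not
    (s := Q.sym2) (p := fun z => z.IsDiag)
  have hs2 : Q.sym2.card = Nat.choose (Q.card + 1) 2 := Finset.card_sym2 Q
  have hch : Nat.choose (Q.card + 1) 2 = Q.card + Nat.choose Q.card 2 := by
    rw [Nat.choose_succ_succ]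
    simp [Nat.choose_one_right]
  omega

section Key
variable {Ω : Type*} [MeasurableSpace Ω] (P : Measure Ω) [IsProbabilityMeasure P]
  {n : ℕ} (lam : EdgeKn n → Ω → ℝ)

omit [IsProbabilityMeasure P] in
lemma prob_mem (hmeas : ∀ e, Measurable (lam e))
    (hunif : ∀ e, Measure.map (lam e) P = (volume : Measure ℝ).restrict (Set.Icc 0 1))
    (e : EdgeKn n) {B : Set ℝ} (hB : MeasurableSet B) :
    P {ω | lam e ω ∈ B} = volume (B ∩ Set.Icc 0 1) := by
  have : P {ω | lam e ω ∈ B} = Measure.map (lam e) P B := by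
    rw [Measure.map_apply (hmeas e) hB]; rfl
  rw [this, hunif e, Measure.restrict_apply hB]

lemma key_bound (hmeas : ∀ e, Measurable (lam e))
    (hindep : iIndepFun lam P)
    (hunif : ∀ e, Measure.map (lam e) P = (volume : Measure ℝ).restrict (Set.Icc 0 1))
    {δ : ℝ}
    (W T' : Finset (EdgeKn n)) (hd : Disjoint W T')
    (SA : Set ({x // x ∈ W} → ℝ)) (hSA : MeasurableSet SA)
    (c : ({x // x ∈ W} → ℝ) → ℝ) (hc : Measurable c) :
    P ({ω | (fun i : {x // x ∈ W} => lam i.1 ω) ∈ SA} ∩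
        ⋂ g ∈ T', {ω | lam g ω ∈
          Set.Icc (c (fun i : {x // x ∈ W} => lam i.1 ω))
                  (c (fun i : {x // x ∈ W} => lam i.1 ω) + δ)})
      ≤ P {ω | (fun i : {x // x ∈ W} => lam i.1 ω) ∈ SA} * ENNReal.ofReal δ ^ T'.card := by
  classical
  set X : Ω → ({x // x ∈ W} → ℝ) := fun ω i => lam i.1 ω with hXdef
  set Y : Ω → ({x // x ∈ T'} → ℝ) := fun ω g => lam g.1 ω with hYdef
  have hX : Measurable X := measurable_pi_lambda _ (fun i => hmeas i.1)
  have hY : Measurable Y := measurable_pi_lambda _ (fun g => hmeas g.1)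
  have hXY : IndepFun X Y P := hindep.indepFun_finset W T' hd hmeas
  haveI : IsProbabilityMeasure (P.map Y) := Measure.isProbabilityMeasure_map hY.aemeasurable
  have hmap : P.map (fun ω => (X ω, Y ω)) = (P.map X).prod (P.map Y) :=
    (indepFun_iff_map_prod_eq_prod_map_map hX.aemeasurable hY.aemeasurable).mp hXY
  set D : Set (({x // x ∈ W} → ℝ) × ({x // x ∈ T'} → ℝ)) :=
    {p | p.1 ∈ SA ∧ ∀ g : {x // x ∈ T'}, p.2 g ∈ Set.Icc (c p.1) (c p.1 + δ)} with hDdef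
  have hD : MeasurableSet D := by
    have hg : ∀ g : {x // x ∈ T'},
        MeasurableSet {p : (({x // x ∈ W} → ℝ) × ({x // x ∈ T'} → ℝ)) |
          p.2 g ∈ Set.Icc (c p.1) (c p.1 + δ)} := by
      intro g
      have h2g : Measurable fun p : (({x // x ∈ W} → ℝ) × ({x // x ∈ T'} → ℝ)) => p.2 g :=
        (measurable_pi_apply g).comp measurable_snd
      have h1 : Measurable fun p : (({x // x ∈ W} → ℝ) × ({x // x ∈ T'} → ℝ)) => c p.1 :=
        hc.comp measurable_fst
      exact (measurableSet_le h1 h2g).inter (measurableSet_le h2g (h1.add measurable_const))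
    have hDeq : D = (Prod.fst ⁻¹' SA) ∩
        ⋂ g, {p : (({x // x ∈ W} → ℝ) × ({x // x ∈ T'} → ℝ)) |
          p.2 g ∈ Set.Icc (c p.1) (c p.1 + δ)} := by
      ext p; simp [hDdef, Set.mem_iInter]
    rw [hDeq]
    exact (hSA.preimage measurable_fst).inter (MeasurableSet.iInter hg)
  have hev : ({ω | (fun i : {x // x ∈ W} => lam i.1 ω) ∈ SA} ∩
        ⋂ g ∈ T', {ω | lam g ω ∈
          Set.Icc (c (fun i : {x // x ∈ W} => lam i.1 ω))
                  (c (fun i : {x // x ∈ W} => lam i.1 ω) + δ)})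
      = (fun ω => (X ω, Y ω)) ⁻¹' D := by
    ext ω
    simp only [Set.mem_inter_iff, Set.mem_setOf_eq, Set.mem_iInter, Set.mem_preimage, hDdef]
    constructor
    · rintro ⟨h1, h2⟩
      exact ⟨h1, fun g => h2 g.1 g.2⟩
    · rintro ⟨h1, h2⟩
      exact ⟨h1, fun g hg => h2 ⟨g, hg⟩⟩
  rw [hev, ← Measure.map_apply (hX.prodMk hY) hD, hmap, Measure.prod_apply hD]
  have hpt : ∀ x, (P.map Y) (Prod.mk x ⁻¹' D)
      ≤ SA.indicator (fun _ => ENNReal.ofReal δ ^ T'.card) x := by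
    intro x
    by_cases hx : x ∈ SA
    · rw [Set.indicator_of_mem hx]
      have hslice : Prod.mk x ⁻¹' D
          = {y : {x // x ∈ T'} → ℝ | ∀ g, y g ∈ Set.Icc (c x) (c x + δ)} := by
        ext y; simp [hDdef, hx]
      rw [hslice]
      have hms : MeasurableSet {y : {x // x ∈ T'} → ℝ | ∀ g, y g ∈ Set.Icc (c x) (c x + δ)} := by
        have : {y : {x // x ∈ T'} → ℝ | ∀ g, y g ∈ Set.Icc (c x) (c x + δ)}
            = ⋂ g, {y : {x // x ∈ T'} → ℝ | y g ∈ Set.Icc (c x) (c x + δ)} := by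
          ext y; simp [Set.mem_iInter]
        rw [this]
        exact MeasurableSet.iInter fun g => (measurable_pi_apply g) measurableSet_Icc
      rw [Measure.map_apply hY hms]
      have hpre : Y ⁻¹' {y : {x // x ∈ T'} → ℝ | ∀ g, y g ∈ Set.Icc (c x) (c x + δ)}
          = ⋂ g ∈ T', (lam g) ⁻¹' Set.Icc (c x) (c x + δ) := by
        ext ω
        simp only [Set.mem_preimage, Set.mem_setOf_eq, Set.mem_iInter]
        exact ⟨fun h g hg => h ⟨g, hg⟩, fun h g => h g.1 g.2⟩
      rw [hpre, hindep.meas_biInter (fun g _ => ⟨Set.Icc (c x) (c x + δ), measurableSet_Icc, rfl⟩)]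
      calc ∏ g ∈ T', P ((lam g) ⁻¹' Set.Icc (c x) (c x + δ))
          ≤ ∏ _g ∈ T', ENNReal.ofReal δ := by
            apply Finset.prod_le_prod'
            intro g _
            have : P ((lam g) ⁻¹' Set.Icc (c x) (c x + δ))
                = volume (Set.Icc (c x) (c x + δ) ∩ Set.Icc 0 1) :=
              prob_mem P lam hmeas hunif g measurableSet_Icc
            rw [this]
            calc volume (Set.Icc (c x) (c x + δ) ∩ Set.Icc (0:ℝ) 1)
                ≤ volume (Set.Icc (c x) (c x + δ)) := measure_mono Set.inter_subset_left
              _ = ENNReal.ofReal δ := by rw [Real.volume_Icc]; ring_nf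
        _ = ENNReal.ofReal δ ^ T'.card := Finset.prod_const _
    · rw [Set.indicator_of_notMem hx]
      have : Prod.mk x ⁻¹' D = ∅ := by
        ext y; simp [hDdef, hx]
      simp [this]
  calc ∫⁻ x, (P.map Y) (Prod.mk x ⁻¹' D) ∂(P.map X)
      ≤ ∫⁻ x, SA.indicator (fun _ => ENNReal.ofReal δ ^ T'.card) x ∂(P.map X) :=
        lintegral_mono hpt
    _ = ENNReal.ofReal δ ^ T'.card * (P.map X) SA := lintegral_indicator_const hSA _
    _ = P {ω | (fun i : {x // x ∈ W} => lam i.1 ω) ∈ SA} * ENNReal.ofReal δ ^ T'.card := by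
        rw [Measure.map_apply hX hSA, mul_comm]; rfl

end Key

/-- In the random simple temporal graph `(K_n, λ)` with `δ ∈ (0,1]`,
if `Q` and `Q'` are `k`-element vertex subsets (`2 ≤ k ≤ n`) intersecting in exactly `t`
elements (`1 ≤ t ≤ k-1`), then the probability that both are `δ`-temporal cliques is at most
`(C(k,2) δ^(C(k,2)-1) (1-δ) + δ^(C(k,2))) · C(k,2) · δ^(C(k,2)-C(t,2)-1)`. -/
theorem stmt10
    {Ω : Type*} [MeasurableSpace Ω] (P : Measure Ω) [IsProbabilityMeasure P]
    (n : ℕ) (hn : 2 ≤ n)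
    (lam : EdgeKn n → Ω → ℝ) (hmeas : ∀ e, Measurable (lam e))
    (hindep : iIndepFun lam P)
    (hunif : ∀ e, Measure.map (lam e) P = (volume : Measure ℝ).restrict (Set.Icc 0 1))
    (δ : ℝ) (hδ0 : 0 < δ) (hδ1 : δ ≤ 1)
    (k t : ℕ) (hk2 : 2 ≤ k) (hkn : k ≤ n) (ht1 : 1 ≤ t) (htk : t ≤ k - 1)
    (Q Q' : Finset (Fin n)) (hQ : Q.card = k) (hQ' : Q'.card = k)
    (hQQ' : (Q ∩ Q').card = t) :
    P {ω | IsTemporalClique (fun e => lam e ω) δ Q ∧ IsTemporalClique (fun e => lam e ω) δ Q'}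
      ≤ ENNReal.ofReal
          (((k.choose 2 : ℝ) * δ ^ (k.choose 2 - 1) * (1 - δ) + δ ^ (k.choose 2)) *
            (k.choose 2 : ℝ) * δ ^ (k.choose 2 - t.choose 2 - 1)) := by
  classical
  set m := k.choose 2 with hm
  set mt := t.choose 2 with hmt
  set S : Finset (EdgeKn n) := edgesIn Q with hS
  set S' : Finset (EdgeKn n) := edgesIn Q' with hS'
  set T : Finset (EdgeKn n) := S' \ S with hT
  have hScard : S.card = m := by rw [hS, card_edgesIn, hQ]
  have hS'card : S'.card = m := by rw [hS', card_edgesIn, hQ']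
  have hintercard : (S' ∩ S).card = mt := by
    have hseteq : S' ∩ S = edgesIn (Q' ∩ Q) := by
      ext e
      simp only [Finset.mem_inter, mem_edgesIn, hS, hS']
      constructor
      · rintro ⟨h1, h2⟩ v hv
        exact ⟨h1 v hv, h2 v hv⟩
      · intro h
        exact ⟨fun v hv => (h v hv).1, fun v hv => (h v hv).2⟩
    rw [hseteq, card_edgesIn, Finset.inter_comm, hQQ']
  have hTcard : T.card = m - mt := by
    rw [hT, ← Finset.sdiff_inter_self_left S' S, Finset.card_sdiff_of_subset Finset.inter_subset_left,
      hS'card, hintercard]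
  have hm1 : 1 ≤ m := Nat.choose_pos hk2
  -- events
  set F : EdgeKn n → Set Ω :=
    fun e => {ω | ∀ g ∈ S, lam e ω ≤ lam g ω ∧ lam g ω ≤ lam e ω + δ} with hF
  set C : EdgeKn n → Set Ω :=
    fun f => {ω | ∀ g ∈ T.erase f, lam f ω ≤ lam g ω ∧ lam g ω ≤ lam f ω + δ} with hC
  set Le : EdgeKn n → Set Ω := fun e => {ω | lam e ω ≤ 1 - δ} with hLe
  set D : Set Ω := {ω | ∀ g ∈ S, 1 - δ < lam g ω} with hD
  have hSne : S.Nonempty := Finset.card_pos.mp (by omega)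
  have hS'ne : S'.Nonempty := Finset.card_pos.mp (by omega)
  -- covering
  have hcover : {ω | IsTemporalClique (fun e => lam e ω) δ Q ∧
        IsTemporalClique (fun e => lam e ω) δ Q'}
      ⊆ ⋃ f ∈ S', ⋃ e ∈ S, (F e ∩ C f) := by
    rintro ω ⟨hA, hB⟩
    obtain ⟨e, he, hemin⟩ := Finset.exists_min_image S (fun g => lam g ω) hSne
    obtain ⟨f, hf, hfmin⟩ := Finset.exists_min_image S' (fun g => lam g ω) hS'ne
    refine Set.mem_biUnion hf (Set.mem_biUnion he ⟨?_, ?_⟩)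
    · intro g hg
      refine ⟨hemin g hg, ?_⟩
      have := hA g e ((mem_edgesIn Q g).mp (by rwa [← hS]))
        ((mem_edgesIn Q e).mp (by rwa [← hS]))
      have := abs_le.mp this
      linarith [this.2]
    · intro g hg
      have hgS' : g ∈ S' := (Finset.mem_sdiff.mp (Finset.mem_of_mem_erase hg)).1
      refine ⟨hfmin g hgS', ?_⟩
      have := hB g f ((mem_edgesIn Q' g).mp (by rwa [← hS']))
        ((mem_edgesIn Q' f).mp (by rwa [← hS']))
      have := abs_le.mp this
      linarith [this.2]
  -- splitting per f
  have hsplitf : ∀ f, (⋃ e ∈ S, (F e ∩ C f))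
      ⊆ (⋃ e ∈ S, (F e ∩ Le e ∩ C f)) ∪ (D ∩ C f) := by
    intro f ω hω
    obtain ⟨e, he, hFe, hCf⟩ := by
      simpa only [Set.mem_iUnion, Set.mem_inter_iff, exists_prop] using hω
    by_cases hle : lam e ω ≤ 1 - δ
    · left
      exact Set.mem_biUnion he ⟨⟨hFe, hle⟩, hCf⟩
    · right
      refine ⟨fun g hg => ?_, hCf⟩
      have := (hFe g hg).1
      push_neg at hle
      linarith
  -- probability of Le e
  have hPLe : ∀ e, P (Le e) = ENNReal.ofReal (1 - δ) := by
    intro e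
    have : Le e = {ω | lam e ω ∈ Set.Iic (1 - δ)} := rfl
    rw [this, prob_mem P lam hmeas hunif e measurableSet_Iic]
    have hseteq : Set.Iic (1 - δ) ∩ Set.Icc (0:ℝ) 1 = Set.Icc 0 (1 - δ) := by
      ext x
      simp only [Set.mem_inter_iff, Set.mem_Iic, Set.mem_Icc]
      constructor
      · rintro ⟨h1, h2, h3⟩; exact ⟨h2, h1⟩
      · rintro ⟨h1, h2⟩; exact ⟨h2, h1, by linarith⟩
    rw [hseteq, Real.volume_Icc]
    norm_num
  -- probability of D
  have hPD : P D = ENNReal.ofReal δ ^ m := by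
    have hDeq : D = ⋂ g ∈ S, (lam g) ⁻¹' Set.Ioi (1 - δ) := by
      ext ω
      simp only [hD, Set.mem_setOf_eq, Set.mem_iInter, Set.mem_preimage, Set.mem_Ioi]
    rw [hDeq, hindep.meas_biInter (fun g _ => ⟨Set.Ioi (1 - δ), measurableSet_Ioi, rfl⟩)]
    have hone : ∀ g, P ((lam g) ⁻¹' Set.Ioi (1 - δ)) = ENNReal.ofReal δ := by
      intro g
      have : (lam g) ⁻¹' Set.Ioi (1 - δ) = {ω | lam g ω ∈ Set.Ioi (1 - δ)} := rfl
      rw [this, prob_mem P lam hmeas hunif g measurableSet_Ioi]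
      have hseteq : Set.Ioi (1 - δ) ∩ Set.Icc (0:ℝ) 1 = Set.Ioc (1 - δ) 1 := by
        ext x
        simp only [Set.mem_inter_iff, Set.mem_Ioi, Set.mem_Icc, Set.mem_Ioc]
        constructor
        · rintro ⟨h1, h2, h3⟩; exact ⟨h1, h3⟩
        · rintro ⟨h1, h2⟩; exact ⟨h1, by linarith, h2⟩
      rw [hseteq, Real.volume_Ioc]
      norm_num
    rw [Finset.prod_congr rfl (fun g _ => hone g), Finset.prod_const, hScard]
  -- the pow bound helper
  have hpow : ∀ f ∈ S', ENNReal.ofReal δ ^ (T.erase f).card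
      ≤ ENNReal.ofReal (δ ^ (m - mt - 1)) := by
    intro f _
    rw [← ENNReal.ofReal_pow hδ0.le]
    apply ENNReal.ofReal_le_ofReal
    apply pow_le_pow_of_le_one hδ0.le hδ1
    have := Finset.pred_card_le_card_erase (s := T) (a := f)
    omega
  -- main bound (i)
  have hb1 : ∀ f ∈ S', ∀ e ∈ S, P (F e ∩ Le e ∩ C f)
      ≤ ENNReal.ofReal ((1 - δ) * δ ^ (m - 1) * δ ^ (m - mt - 1)) := by
    intro f hf e he
    set W : Finset (EdgeKn n) := insert f S with hW
    have hfW : f ∈ W := Finset.mem_insert_self f S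
    have heW : e ∈ W := Finset.mem_insert_of_mem he
    have hdisj : Disjoint W (T.erase f) := by
      rw [Finset.disjoint_left]
      intro a haW haT
      obtain ⟨hane, haT⟩ := Finset.mem_erase.mp haT
      have haS : a ∉ S := (Finset.mem_sdiff.mp haT).2
      rcases Finset.mem_insert.mp haW with h | h
      · exact hane h
      · exact haS h
    set SA1 : Set ({x // x ∈ W} → ℝ) :=
      {x | x ⟨e, heW⟩ ≤ 1 - δ ∧ ∀ g : {x // x ∈ W}, g.1 ∈ S →
        (x ⟨e, heW⟩ ≤ x g ∧ x g ≤ x ⟨e, heW⟩ + δ)} with hSA1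
    have hSA1m : MeasurableSet SA1 := by
      have hSA1eq : SA1 = {x : {x // x ∈ W} → ℝ | x ⟨e, heW⟩ ≤ 1 - δ} ∩
          ⋂ g : {x // x ∈ W},
            {x | g.1 ∈ S → (x ⟨e, heW⟩ ≤ x g ∧ x g ≤ x ⟨e, heW⟩ + δ)} := by
        ext x; simp [hSA1, Set.mem_iInter]
      rw [hSA1eq]
      apply MeasurableSet.inter
      · exact measurableSet_le (measurable_pi_apply _) measurable_const
      · apply MeasurableSet.iInter
        intro g
        by_cases hgS : g.1 ∈ S
        · have : {x : {x // x ∈ W} → ℝ | g.1 ∈ S →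
              (x ⟨e, heW⟩ ≤ x g ∧ x g ≤ x ⟨e, heW⟩ + δ)}
              = {x : {x // x ∈ W} → ℝ | x ⟨e, heW⟩ ≤ x g} ∩
                {x | x g ≤ x ⟨e, heW⟩ + δ} := by
            ext x; simp [hgS]
          rw [this]
          exact (measurableSet_le (measurable_pi_apply (⟨e, heW⟩ : {x // x ∈ W}))
              (measurable_pi_apply g)).inter
            (measurableSet_le (measurable_pi_apply g)
              ((measurable_pi_apply (⟨e, heW⟩ : {x // x ∈ W})).add measurable_const))
        · have : {x : {x // x ∈ W} → ℝ | g.1 ∈ S →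
              (x ⟨e, heW⟩ ≤ x g ∧ x g ≤ x ⟨e, heW⟩ + δ)} = Set.univ := by
            ext x; simp [hgS]
          rw [this]
          exact MeasurableSet.univ
    have hsub1 : F e ∩ Le e ∩ C f
        ⊆ {ω | (fun i : {x // x ∈ W} => lam i.1 ω) ∈ SA1} ∩
          ⋂ g ∈ T.erase f, {ω | lam g ω ∈
            Set.Icc ((fun x => x ⟨f, hfW⟩) (fun i : {x // x ∈ W} => lam i.1 ω))
                    ((fun x => x ⟨f, hfW⟩) (fun i : {x // x ∈ W} => lam i.1 ω) + δ)} := by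
      rintro ω ⟨⟨hFe, hLee⟩, hCf⟩
      refine ⟨⟨hLee, fun g hg => hFe g.1 hg⟩, ?_⟩
      simp only [Set.mem_iInter, Set.mem_setOf_eq]
      intro g hg
      exact hCf g hg
    have hkey1 := key_bound P lam hmeas hindep hunif (δ := δ) W (T.erase f) hdisj SA1 hSA1m
      (fun x => x ⟨f, hfW⟩) (measurable_pi_apply _)
    have step1 : P (F e ∩ Le e ∩ C f)
        ≤ P {ω | (fun i : {x // x ∈ W} => lam i.1 ω) ∈ SA1} *
          ENNReal.ofReal δ ^ (T.erase f).card :=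
      le_trans (measure_mono hsub1) hkey1
    -- second application: bound P of SA1 event
    have hdisj2 : Disjoint ({e} : Finset (EdgeKn n)) (S.erase e) := by
      simp [Finset.disjoint_left]
    have heW2 : e ∈ ({e} : Finset (EdgeKn n)) := Finset.mem_singleton_self e
    set SA2 : Set ({x // x ∈ ({e} : Finset (EdgeKn n))} → ℝ) :=
      {x | x ⟨e, heW2⟩ ≤ 1 - δ} with hSA2
    have hSA2m : MeasurableSet SA2 :=
      measurableSet_le (measurable_pi_apply _) measurable_const
    have hsub2 : {ω | (fun i : {x // x ∈ W} => lam i.1 ω) ∈ SA1}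
        ⊆ {ω | (fun i : {x // x ∈ ({e} : Finset (EdgeKn n))} => lam i.1 ω) ∈ SA2} ∩
          ⋂ g ∈ S.erase e, {ω | lam g ω ∈
            Set.Icc ((fun x => x ⟨e, heW2⟩)
                (fun i : {x // x ∈ ({e} : Finset (EdgeKn n))} => lam i.1 ω))
              ((fun x => x ⟨e, heW2⟩)
                (fun i : {x // x ∈ ({e} : Finset (EdgeKn n))} => lam i.1 ω) + δ)} := by
      rintro ω ⟨h1, h2⟩
      refine ⟨h1, ?_⟩
      simp only [Set.mem_iInter, Set.mem_setOf_eq]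
      intro g hg
      obtain ⟨hge, hgS⟩ := Finset.mem_erase.mp hg
      exact h2 ⟨g, Finset.mem_insert_of_mem hgS⟩ hgS
    have hkey2 := key_bound P lam hmeas hindep hunif (δ := δ)
      ({e} : Finset (EdgeKn n)) (S.erase e) hdisj2 SA2 hSA2m
      (fun x => x ⟨e, heW2⟩) (measurable_pi_apply _)
    have hSA2ev : {ω | (fun i : {x // x ∈ ({e} : Finset (EdgeKn n))} => lam i.1 ω) ∈ SA2}
        = Le e := rfl
    have step2 : P {ω | (fun i : {x // x ∈ W} => lam i.1 ω) ∈ SA1}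
        ≤ ENNReal.ofReal (1 - δ) * ENNReal.ofReal δ ^ (S.erase e).card := by
      refine le_trans (measure_mono hsub2) (le_trans hkey2 ?_)
      rw [hSA2ev, hPLe e]
    have hcarderase : (S.erase e).card = m - 1 := by
      rw [Finset.card_erase_of_mem he, hScard]
    calc P (F e ∩ Le e ∩ C f)
        ≤ (ENNReal.ofReal (1 - δ) * ENNReal.ofReal δ ^ (S.erase e).card) *
            ENNReal.ofReal δ ^ (T.erase f).card := by
          exact le_trans step1 (mul_le_mul' step2 le_rfl)
      _ ≤ ENNReal.ofReal (1 - δ) * ENNReal.ofReal (δ ^ (m - 1)) *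
            ENNReal.ofReal (δ ^ (m - mt - 1)) := by
          rw [hcarderase, ← ENNReal.ofReal_pow hδ0.le]
          exact mul_le_mul' le_rfl (hpow f hf)
      _ = ENNReal.ofReal ((1 - δ) * δ ^ (m - 1) * δ ^ (m - mt - 1)) := by
          rw [← ENNReal.ofReal_mul (by linarith), ← ENNReal.ofReal_mul
            (mul_nonneg (by linarith) (pow_nonneg hδ0.le _))]
  -- main bound (ii)
  have hb2 : ∀ f ∈ S', P (D ∩ C f)
      ≤ ENNReal.ofReal (δ ^ m * δ ^ (m - mt - 1)) := by
    intro f hf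
    set W : Finset (EdgeKn n) := insert f S with hW
    have hfW : f ∈ W := Finset.mem_insert_self f S
    have hdisj : Disjoint W (T.erase f) := by
      rw [Finset.disjoint_left]
      intro a haW haT
      obtain ⟨hane, haT⟩ := Finset.mem_erase.mp haT
      have haS : a ∉ S := (Finset.mem_sdiff.mp haT).2
      rcases Finset.mem_insert.mp haW with h | h
      · exact hane h
      · exact haS h
    set SA3 : Set ({x // x ∈ W} → ℝ) :=
      {x | ∀ g : {x // x ∈ W}, g.1 ∈ S → 1 - δ < x g} with hSA3
    have hSA3m : MeasurableSet SA3 := by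
      have : SA3 = ⋂ g : {x // x ∈ W}, {x | g.1 ∈ S → 1 - δ < x g} := by
        ext x; simp [hSA3, Set.mem_iInter]
      rw [this]
      apply MeasurableSet.iInter
      intro g
      by_cases hgS : g.1 ∈ S
      · have : {x : {x // x ∈ W} → ℝ | g.1 ∈ S → 1 - δ < x g}
            = {x : {x // x ∈ W} → ℝ | 1 - δ < x g} := by
          ext x; simp [hgS]
        rw [this]
        exact measurableSet_lt measurable_const (measurable_pi_apply g)
      · have : {x : {x // x ∈ W} → ℝ | g.1 ∈ S → 1 - δ < x g} = Set.univ := by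
          ext x; simp [hgS]
        rw [this]
        exact MeasurableSet.univ
    have hsub : D ∩ C f
        ⊆ {ω | (fun i : {x // x ∈ W} => lam i.1 ω) ∈ SA3} ∩
          ⋂ g ∈ T.erase f, {ω | lam g ω ∈
            Set.Icc ((fun x => x ⟨f, hfW⟩) (fun i : {x // x ∈ W} => lam i.1 ω))
                    ((fun x => x ⟨f, hfW⟩) (fun i : {x // x ∈ W} => lam i.1 ω) + δ)} := by
      rintro ω ⟨hDω, hCf⟩
      refine ⟨fun g hg => hDω g.1 hg, ?_⟩
      simp only [Set.mem_iInter, Set.mem_setOf_eq]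
      intro g hg
      exact hCf g hg
    have hkey := key_bound P lam hmeas hindep hunif (δ := δ) W (T.erase f) hdisj SA3 hSA3m
      (fun x => x ⟨f, hfW⟩) (measurable_pi_apply _)
    have hSA3ev : {ω | (fun i : {x // x ∈ W} => lam i.1 ω) ∈ SA3} ⊆ D := by
      intro ω h g hg
      exact h ⟨g, Finset.mem_insert_of_mem hg⟩ hg
    calc P (D ∩ C f)
        ≤ P {ω | (fun i : {x // x ∈ W} => lam i.1 ω) ∈ SA3} *
            ENNReal.ofReal δ ^ (T.erase f).card := le_trans (measure_mono hsub) hkey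
      _ ≤ P D * ENNReal.ofReal (δ ^ (m - mt - 1)) :=
          mul_le_mul' (measure_mono hSA3ev) (hpow f hf)
      _ = ENNReal.ofReal (δ ^ m * δ ^ (m - mt - 1)) := by
          rw [hPD, ← ENNReal.ofReal_pow hδ0.le, ← ENNReal.ofReal_mul (by positivity)]
  -- assemble
  have hperf : ∀ f ∈ S', P (⋃ e ∈ S, (F e ∩ C f))
      ≤ ENNReal.ofReal ((m : ℝ) * ((1 - δ) * δ ^ (m - 1) * δ ^ (m - mt - 1))
          + δ ^ m * δ ^ (m - mt - 1)) := by
    intro f hf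
    calc P (⋃ e ∈ S, (F e ∩ C f))
        ≤ P ((⋃ e ∈ S, (F e ∩ Le e ∩ C f)) ∪ (D ∩ C f)) := measure_mono (hsplitf f)
      _ ≤ P (⋃ e ∈ S, (F e ∩ Le e ∩ C f)) + P (D ∩ C f) := measure_union_le _ _
      _ ≤ (∑ e ∈ S, P (F e ∩ Le e ∩ C f)) + P (D ∩ C f) := by
          exact add_le_add_left (measure_biUnion_finset_le S _) _
      _ ≤ (∑ _e ∈ S, ENNReal.ofReal ((1 - δ) * δ ^ (m - 1) * δ ^ (m - mt - 1)))
            + ENNReal.ofReal (δ ^ m * δ ^ (m - mt - 1)) :=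
          add_le_add (Finset.sum_le_sum (fun e he => hb1 f hf e he)) (hb2 f hf)
      _ = ENNReal.ofReal ((m : ℝ) * ((1 - δ) * δ ^ (m - 1) * δ ^ (m - mt - 1))
            + δ ^ m * δ ^ (m - mt - 1)) := by
          have hnn1 : (0:ℝ) ≤ (m : ℝ) * ((1 - δ) * δ ^ (m - 1) * δ ^ (m - mt - 1)) :=
            mul_nonneg (Nat.cast_nonneg m)
              (mul_nonneg (mul_nonneg (by linarith) (pow_nonneg hδ0.le _))
                (pow_nonneg hδ0.le _))
          rw [Finset.sum_const, hScard, nsmul_eq_mul,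
            ← ENNReal.ofReal_natCast m, ← ENNReal.ofReal_mul (Nat.cast_nonneg m),
            ← ENNReal.ofReal_add hnn1 (by positivity)]
  calc P {ω | IsTemporalClique (fun e => lam e ω) δ Q ∧
        IsTemporalClique (fun e => lam e ω) δ Q'}
      ≤ P (⋃ f ∈ S', ⋃ e ∈ S, (F e ∩ C f)) := measure_mono hcover
    _ ≤ ∑ f ∈ S', P (⋃ e ∈ S, (F e ∩ C f)) := measure_biUnion_finset_le S' _
    _ ≤ ∑ _f ∈ S', ENNReal.ofReal ((m : ℝ) * ((1 - δ) * δ ^ (m - 1) * δ ^ (m - mt - 1))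
          + δ ^ m * δ ^ (m - mt - 1)) := Finset.sum_le_sum hperf
    _ = ENNReal.ofReal ((m : ℝ) * ((m : ℝ) * ((1 - δ) * δ ^ (m - 1) * δ ^ (m - mt - 1))
          + δ ^ m * δ ^ (m - mt - 1))) := by
        rw [Finset.sum_const, hS'card, nsmul_eq_mul,
          ← ENNReal.ofReal_natCast m, ← ENNReal.ofReal_mul (Nat.cast_nonneg m)]
    _ = ENNReal.ofReal
          (((k.choose 2 : ℝ) * δ ^ (k.choose 2 - 1) * (1 - δ) + δ ^ (k.choose 2)) *
            (k.choose 2 : ℝ) * δ ^ (k.choose 2 - t.choose 2 - 1)) := by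
        rw [← hm, ← hmt]
        congr 1
        ring
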